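/- There exists a k-algebra derivation φ of U(g₁) such that φ(ι(M)) = (tr M / n)·1 for every M ∈ g₁ (equivalently, φ vanishes on the images of sl_n and of the translation part, and sends the image of the identity matrix of the gl_n-block to 1). Moreover φ is not inner: there is no u ∈ U(g₁) with u·ι(M) − ι(M)·u = (tr M / n)·1 for all M ∈ g₁. -/

import Mathlib

set_option synthInstance.maxHeartbeats 1000000
set_option maxHeartbeats 1000000


open Matrix

attribute [local instance 100] LieRing.ofAssociativeRing

/-- The affine Lie algebra `g₁ = gl_n(k) ⋉ k^n`, realized as the Lie algebra of
`(n+1) × (n+1)` matrices over `k` whose last row is zero. -/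
def affLie (k : Type*) [Field k] (n : ℕ) :
    LieSubalgebra k (Matrix (Fin (n + 1)) (Fin (n + 1)) k) where
  carrier := {M | ∀ j, M (Fin.last n) j = 0}
  add_mem' := by
    intro a b ha hb j
    simp [Matrix.add_apply, ha j, hb j]
  zero_mem' := by intro j; simp
  smul_mem' := by
    intro c M hM j
    simp [Matrix.smul_apply, hM j]
  lie_mem' := by
    intro M N hM hN j
    simp only [Ring.lie_def, Matrix.sub_apply, Matrix.mul_apply]
    simp only [Set.mem_setOf_eq] at hM hN
    simp [hM, hN]

noncomputable def affDer (k : Type*) [Field k] (n : ℕ) :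
    affLie k n →ₗ⁅k⁆ DualNumber (UniversalEnvelopingAlgebra k (affLie k n)) where
  toFun M := TrivSqZeroExt.inl (UniversalEnvelopingAlgebra.ι k M) + TrivSqZeroExt.inr
    ((Matrix.trace (M : Matrix (Fin (n+1)) (Fin (n+1)) k) / n) • 1)
  map_add' M N := by
    ext
    · simp
    · simp [add_div, add_smul]
  map_smul' c M := by
    ext
    · simp
    · simp only [RingHom.id_apply, TrivSqZeroExt.snd_smul, TrivSqZeroExt.snd_mk,
        TrivSqZeroExt.snd_add, TrivSqZeroExt.snd_inl, TrivSqZeroExt.snd_inr, zero_add]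
      rw [show ((c • M : affLie k n) : Matrix (Fin (n+1)) (Fin (n+1)) k) = c • (M : Matrix (Fin (n+1)) (Fin (n+1)) k) from rfl, Matrix.trace_smul, smul_eq_mul, mul_div_assoc, mul_smul]
  map_lie' {M N} := by
    ext
    · simp [Ring.lie_def]
    · have htr : Matrix.trace ((⁅M, N⁆ : affLie k n) : Matrix (Fin (n+1)) (Fin (n+1)) k) = 0 := by
        rw [LieSubalgebra.coe_bracket, Ring.lie_def, Matrix.trace_sub, Matrix.trace_mul_comm,
          sub_self]
      simp only [Ring.lie_def, TrivSqZeroExt.snd_sub, TrivSqZeroExt.snd_mul,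
        TrivSqZeroExt.fst_sub, TrivSqZeroExt.fst_mk, TrivSqZeroExt.snd_mk,
        htr, zero_div, zero_smul, TrivSqZeroExt.fst_add, TrivSqZeroExt.snd_add,
        TrivSqZeroExt.fst_inl, TrivSqZeroExt.fst_inr, TrivSqZeroExt.snd_inl,
        TrivSqZeroExt.snd_inr, add_zero, zero_add]
      simp only [smul_eq_mul, MulOpposite.smul_eq_mul_unop, MulOpposite.unop_op,
        mul_smul_comm, smul_mul_assoc, mul_one, one_mul]
      abel


/-- (`k` algebraically closed, characteristic 0, `n ≥ 1`) there exists a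
`k`-algebra derivation `φ` of `U(g₁)` with `φ(ι(M)) = (tr M / n)·1` for all `M ∈ g₁`,
and moreover `φ` is not inner: no `u ∈ U(g₁)` satisfies
`u·ι(M) - ι(M)·u = (tr M / n)·1` for all `M ∈ g₁`. -/
theorem stmt_8 {k : Type*} [Field k] [IsAlgClosed k] [CharZero k] {n : ℕ} (hn : 1 ≤ n) :
    (∃ φ : UniversalEnvelopingAlgebra k (affLie k n) →ₗ[k]
        UniversalEnvelopingAlgebra k (affLie k n),
      (∀ a b, φ (a * b) = φ a * b + a * φ b) ∧
      (∀ M : affLie k n, φ (UniversalEnvelopingAlgebra.ι k M) =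
        (Matrix.trace (M : Matrix (Fin (n + 1)) (Fin (n + 1)) k) / n) • 1)) ∧
    ¬ (∃ u : UniversalEnvelopingAlgebra k (affLie k n),
      ∀ M : affLie k n,
        u * UniversalEnvelopingAlgebra.ι k M - UniversalEnvelopingAlgebra.ι k M * u =
          (Matrix.trace (M : Matrix (Fin (n + 1)) (Fin (n + 1)) k) / n) • 1) := by
  classical
  set U := UniversalEnvelopingAlgebra k (affLie k n) with hU
  constructor
  · set Φ := UniversalEnvelopingAlgebra.lift k (affDer k n) with hΦ
    have hfst : ∀ x : U, (Φ x).fst = x := by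
      have h : (TrivSqZeroExt.fstHom k U U).comp Φ = AlgHom.id k U := by
        apply UniversalEnvelopingAlgebra.hom_ext
        ext x
        show (TrivSqZeroExt.fstHom k U U) (Φ (UniversalEnvelopingAlgebra.ι k x))
            = UniversalEnvelopingAlgebra.ι k x
        rw [hΦ, UniversalEnvelopingAlgebra.lift_ι_apply]
        simp [affDer]
      intro x
      exact DFunLike.congr_fun h x
    refine ⟨{ toFun := fun x => (Φ x).snd,
              map_add' := fun a b => by simp,
              map_smul' := fun c a => by simp }, ?_, ?_⟩
    · intro a b
      have hm : Φ (a * b) = Φ a * Φ b := map_mul Φ a b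
      simp only [LinearMap.coe_mk, AddHom.coe_mk, hm, TrivSqZeroExt.snd_mul, hfst]
      simp only [smul_eq_mul, MulOpposite.smul_eq_mul_unop, MulOpposite.unop_op]
      exact add_comm _ _
    · intro M
      simp [Φ, UniversalEnvelopingAlgebra.lift_ι_apply, affDer]
  · rintro ⟨u, hu⟩
    set Ψ := UniversalEnvelopingAlgebra.lift k ((affLie k n).incl) with hΨ
    have hEmem : (Matrix.diagonal (fun i => if i = Fin.last n then (0:k) else 1)) ∈ affLie k n := by
      intro j
      rcases eq_or_ne (Fin.last n) j with h | h
      · subst h; simp [Matrix.diagonal_apply]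
      · simp [Matrix.diagonal_apply_ne _ h]
    set E : affLie k n := ⟨_, hEmem⟩ with hE
    have htrE : Matrix.trace (E : Matrix (Fin (n+1)) (Fin (n+1)) k) = n := by
      rw [hE]
      simp only [Matrix.trace_diagonal]
      have h1 : ∀ i : Fin (n+1), (if i = Fin.last n then (0:k) else 1)
          = 1 - (if i = Fin.last n then (1:k) else 0) := by
        intro i; split <;> simp
      rw [Finset.sum_congr rfl fun i _ => h1 i, Finset.sum_sub_distrib,
        Finset.sum_ite_eq' Finset.univ (Fin.last n) (fun _ => (1:k))]
      simp [Finset.card_univ]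
    have key := congrArg Ψ (hu E)
    rw [map_sub, _root_.map_mul, _root_.map_mul, _root_.map_smul, _root_.map_one,
      UniversalEnvelopingAlgebra.lift_ι_apply] at key
    have hcoe : ((affLie k n).incl E : Matrix (Fin (n+1)) (Fin (n+1)) k) = (E : Matrix _ _ k) := rfl
    have hn0 : (n:k) ≠ 0 := Nat.cast_ne_zero.mpr (by omega)
    rw [hcoe, htrE, div_self hn0, one_smul] at key
    have htr := congrArg Matrix.trace key
    rw [Matrix.trace_sub, Matrix.trace_mul_comm, sub_self, Matrix.trace_one] at htr
    have hne : ((Fintype.card (Fin (n+1)) : k)) ≠ 0 := by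
      simpa using Nat.cast_add_one_ne_zero (R := k) n
    exact hne htr.symm
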